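/- Let N ≥ 5, p > N/(N−4), and let ω satisfy 4p/(p−1) ≤ ω < N. Then there exist a constant C > 0, a continuous function f on D^c with 0 < f(x) ≤ C|x|^{−ω} for all |x| ≥ 1, and a strictly positive smooth function v on D^c such that Δ²v(x) = v(x)^p + f(x) for all |x| > 1. Explicitly, one may take v(x) = ξ|x|^{−m} for any m with ω − 4 < m < N − 4 (this interval is nonempty and any such m also satisfies m > 4/(p−1)) and ξ > 0 sufficiently small, with f := Δ²v − v^p. -/

import Mathlib

open MeasureTheory Real Set Topology Filter

noncomputable section

/-- `ℝ^N` -/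
abbrev E (N : ℕ) : Type := EuclideanSpace ℝ (Fin N)

/-- The Laplacian: sum of second partial derivatives. -/
def lapl {N : ℕ} (f : E N → ℝ) (x : E N) : ℝ :=
  ∑ i : Fin N,
    fderiv ℝ (fun y => fderiv ℝ f y (EuclideanSpace.single i 1)) x (EuclideanSpace.single i 1)

/-- The biharmonic operator `Δ² = Δ ∘ Δ`. -/
def bilapl {N : ℕ} (f : E N → ℝ) : E N → ℝ := lapl (lapl f)

lemma sumsq_eq {N : ℕ} (y : E N) : ∑ i, y i ^ 2 = ‖y‖ ^ 2 := by
  rw [EuclideanSpace.norm_eq, Real.sq_sqrt (by positivity)]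
  simp [sq_abs]

lemma normpow_eq {N : ℕ} (a : ℝ) (y : E N) :
    ‖y‖ ^ a = (∑ i, y i ^ 2) ^ (a / 2) := by
  rw [sumsq_eq, ← Real.rpow_natCast ‖y‖ 2, ← Real.rpow_mul (norm_nonneg y)]
  ring_nf

lemma hasFDerivAt_sumsq {N : ℕ} (x : E N) :
    HasFDerivAt (fun y : E N => ∑ i, y i ^ 2)
      (∑ i, (2 * x i) • (EuclideanSpace.proj i : E N →L[ℝ] ℝ)) x := by
  apply HasFDerivAt.fun_sum
  intro i _
  have h : HasFDerivAt (fun y : E N => y i * y i) _ x := ((EuclideanSpace.proj i : E N →L[ℝ] ℝ).hasFDerivAt (x := x)).mul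
    ((EuclideanSpace.proj i : E N →L[ℝ] ℝ).hasFDerivAt (x := x))
  simpa [pow_two, two_mul, add_smul] using h

/-- evaluation of the sum-of-projections map -/
lemma sumproj_apply {N : ℕ} (x : E N) (j : Fin N) :
    (∑ i, x i • (EuclideanSpace.proj i : E N →L[ℝ] ℝ)) (EuclideanSpace.single j 1) = x j := by
  simp [ContinuousLinearMap.sum_apply, EuclideanSpace.single_apply,
    Finset.sum_ite_eq', Finset.mem_univ]

lemma norm_sq_rpow {N : ℕ} (x : E N) (t : ℝ) :
    ((‖x‖ : ℝ) ^ (2:ℕ)) ^ t = ‖x‖ ^ (2 * t) := by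
  rw [← Real.rpow_natCast ‖x‖ 2, ← Real.rpow_mul (norm_nonneg x)]
  norm_num

lemma hasFDerivAt_cnormpow {N : ℕ} (c a : ℝ) {x : E N} (hx : x ≠ 0) :
    HasFDerivAt (fun y : E N => c * ‖y‖ ^ a)
      ((c * a * ‖x‖ ^ (a - 2)) • (∑ i, x i • (EuclideanSpace.proj i : E N →L[ℝ] ℝ))) x := by
  have hS : (∑ i, x i ^ 2) ≠ 0 := by
    rw [sumsq_eq]; exact pow_ne_zero 2 (norm_ne_zero_iff.mpr hx)
  have h1 := (hasFDerivAt_sumsq x).rpow_const (p := a / 2) (Or.inl hS)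
  have h2 := h1.const_mul c
  have hfun : (fun y : E N => c * (∑ i, y i ^ 2) ^ (a / 2)) = fun y : E N => c * ‖y‖ ^ a := by
    funext y; rw [normpow_eq]
  rw [hfun] at h2
  have hD : c • ((a / 2 * (∑ i, x i ^ 2) ^ (a / 2 - 1)) •
        ∑ i, (2 * x i) • (EuclideanSpace.proj i : E N →L[ℝ] ℝ))
      = (c * a * ‖x‖ ^ (a - 2)) • (∑ i, x i • (EuclideanSpace.proj i : E N →L[ℝ] ℝ)) := by
    rw [sumsq_eq, norm_sq_rpow, show (2 : ℝ) * (a / 2 - 1) = a - 2 by ring]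
    rw [smul_smul, Finset.smul_sum, Finset.smul_sum]
    refine Finset.sum_congr rfl fun i _ => ?_
    rw [smul_smul, smul_smul]
    congr 1
    ring
  rw [hD] at h2
  exact h2

lemma fderiv_cnormpow_apply {N : ℕ} (c a : ℝ) {x : E N} (hx : x ≠ 0) (j : Fin N) :
    fderiv ℝ (fun y : E N => c * ‖y‖ ^ a) x (EuclideanSpace.single j 1)
      = c * a * ‖x‖ ^ (a - 2) * x j := by
  rw [(hasFDerivAt_cnormpow c a hx).fderiv]
  rw [ContinuousLinearMap.smul_apply, sumproj_apply]
  simp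

lemma lapl_cnormpow {N : ℕ} (c a : ℝ) {x : E N} (hx : x ≠ 0) :
    lapl (fun y : E N => c * ‖y‖ ^ a) x = c * (a * (a + (N:ℝ) - 2)) * ‖x‖ ^ (a - 2) := by
  have hxn : (0:ℝ) < ‖x‖ := norm_pos_iff.mpr hx
  unfold lapl
  have key : ∀ i : Fin N,
      fderiv ℝ (fun y => fderiv ℝ (fun z : E N => c * ‖z‖ ^ a) y (EuclideanSpace.single i 1)) x
        (EuclideanSpace.single i 1)
      = c * a * ‖x‖ ^ (a-2) + c * a * (a-2) * ‖x‖ ^ (a-4) * (x i) ^ 2 := by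
    intro i
    have hev : (fun y => fderiv ℝ (fun z : E N => c * ‖z‖ ^ a) y (EuclideanSpace.single i 1))
        =ᶠ[𝓝 x] (fun y : E N => (c * a * ‖y‖ ^ (a-2)) * y i) := by
      filter_upwards [IsOpen.mem_nhds isOpen_compl_singleton hx] with y hy
      exact fderiv_cnormpow_apply c a hy i
    rw [hev.fderiv_eq]
    have h1 := hasFDerivAt_cnormpow (c * a) (a - 2) hx
    have h2 : HasFDerivAt (fun y : E N => y i)
        (EuclideanSpace.proj i : E N →L[ℝ] ℝ) x :=
      (EuclideanSpace.proj i : E N →L[ℝ] ℝ).hasFDerivAt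
    have h3 : HasFDerivAt (fun y : E N => c * a * ‖y‖ ^ (a - 2) * y i) _ x := h1.mul h2
    rw [h3.fderiv]
    rw [ContinuousLinearMap.add_apply, ContinuousLinearMap.smul_apply,
      ContinuousLinearMap.smul_apply, ContinuousLinearMap.smul_apply, sumproj_apply]
    have : (EuclideanSpace.proj i : E N →L[ℝ] ℝ) (EuclideanSpace.single i 1) = 1 := by
      simp
    rw [this]
    have he : a - 2 - 2 = a - 4 := by ring
    rw [he]
    simp only [smul_eq_mul]
    ring
  rw [Finset.sum_congr rfl fun i _ => key i]
  rw [Finset.sum_add_distrib, Finset.sum_const, ← Finset.mul_sum, sumsq_eq]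
  have h4 : ‖x‖ ^ (a-4) * ‖x‖ ^ (2:ℕ) = ‖x‖ ^ (a-2) := by
    rw [← Real.rpow_natCast ‖x‖ 2, ← Real.rpow_add hxn]
    congr 1; ring
  rw [mul_assoc (c * a * (a - 2)), h4]
  simp only [Finset.card_univ, Fintype.card_fin, nsmul_eq_mul]
  ring

lemma lapl_congr {N : ℕ} {f g : E N → ℝ} {x : E N} (h : f =ᶠ[𝓝 x] g) :
    lapl f x = lapl g x := by
  unfold lapl
  refine Finset.sum_congr rfl fun i _ => ?_
  have h1 : (fun y => fderiv ℝ f y (EuclideanSpace.single i 1))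
      =ᶠ[𝓝 x] (fun y => fderiv ℝ g y (EuclideanSpace.single i 1)) := by
    filter_upwards [h.fderiv (𝕜 := ℝ)] with y hy
    rw [hy]
  rw [h1.fderiv_eq]

lemma bilapl_cnormpow {N : ℕ} (c a : ℝ) {x : E N} (hx : x ≠ 0) :
    bilapl (fun y : E N => c * ‖y‖ ^ a) x
      = (c * (a * (a + (N:ℝ) - 2)) * ((a - 2) * ((a - 2) + (N:ℝ) - 2))) * ‖x‖ ^ (a - 4) := by
  unfold bilapl
  have hev : lapl (fun y : E N => c * ‖y‖ ^ a)
      =ᶠ[𝓝 x] (fun y : E N => (c * (a * (a + (N:ℝ) - 2))) * ‖y‖ ^ (a - 2)) := by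
    filter_upwards [IsOpen.mem_nhds isOpen_compl_singleton hx] with y hy
    exact lapl_cnormpow c a hy
  rw [lapl_congr hev, lapl_cnormpow _ _ hx, show a - 2 - 2 = a - 4 by ring]

lemma contDiffOn_cnormpow {N : ℕ} (c a : ℝ) :
    ContDiffOn ℝ (⊤ : ℕ∞) (fun y : E N => c * ‖y‖ ^ a) {x : E N | 1 ≤ ‖x‖} := by
  intro x hx
  have hx1 : (1:ℝ) ≤ ‖x‖ := hx
  have hx0 : x ≠ 0 := by
    intro h
    rw [h, norm_zero] at hx1
    linarith
  apply ContDiffAt.contDiffWithinAt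
  have hfun : (fun y : E N => c * ‖y‖ ^ a)
      = fun y : E N => c * (∑ i, y i ^ 2) ^ (a / 2) := by
    funext y; rw [normpow_eq]
  rw [hfun]
  have hS : ContDiffAt ℝ (⊤ : ℕ∞) (fun y : E N => ∑ i, y i ^ 2) x := by
    apply ContDiff.contDiffAt
    apply ContDiff.sum
    intro i _
    exact ((EuclideanSpace.proj i : E N →L[ℝ] ℝ).contDiff).pow 2
  have hne : (∑ i, x i ^ 2) ≠ 0 := by
    rw [sumsq_eq]; exact pow_ne_zero 2 (norm_ne_zero_iff.mpr hx0)
  have hr := (Real.contDiffAt_rpow_const_of_ne (n := ((⊤ : ℕ∞) : WithTop ℕ∞)) (p := a / 2) hne).comp x hS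
  exact contDiffAt_const.mul hr

/-- second critical exponent (Lee–Ni), existence part. For `N ≥ 5`,
`p > N/(N−4)` and `4p/(p−1) ≤ ω < N`, the interval `(ω−4, N−4)` is nonempty, every
`m` in it satisfies `m > 4/(p−1)`, and for every such `m` and every sufficiently
small `ξ > 0`, the strictly positive smooth function `v(x) = ξ|x|^{−m}` solves
`Δ²v = v^p + f` on `{|x| > 1}` with forcing term `f := Δ²v − v^p` continuous and
satisfying `0 < f(x) ≤ C|x|^{−ω}` for all `|x| ≥ 1`. -/
theorem second_critical_existence
    (N : ℕ) (hN : 5 ≤ N) (p : ℝ) (hp : (N : ℝ) / ((N : ℝ) - 4) < p)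
    (ω : ℝ) (hω₁ : 4 * p / (p - 1) ≤ ω) (hω₂ : ω < N) :
    (ω - 4 < (N : ℝ) - 4) ∧
    (∀ m : ℝ, ω - 4 < m → m < (N : ℝ) - 4 → 4 / (p - 1) < m) ∧
    ∀ m : ℝ, ω - 4 < m → m < (N : ℝ) - 4 →
      ∃ ξ₀ > (0 : ℝ), ∀ ξ : ℝ, 0 < ξ → ξ ≤ ξ₀ →
        ∃ C > (0 : ℝ), ∃ f : E N → ℝ,
          ContinuousOn f {x : E N | 1 ≤ ‖x‖} ∧
          (∀ x : E N, 1 ≤ ‖x‖ → 0 < f x ∧ f x ≤ C * ‖x‖ ^ (-ω)) ∧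
          ContDiffOn ℝ (⊤ : ℕ∞) (fun y : E N => ξ * ‖y‖ ^ (-m)) {x : E N | 1 ≤ ‖x‖} ∧
          (∀ x : E N, 1 ≤ ‖x‖ → 0 < ξ * ‖x‖ ^ (-m)) ∧
          (∀ x : E N, 1 < ‖x‖ →
            bilapl (fun y => ξ * ‖y‖ ^ (-m)) x = (ξ * ‖x‖ ^ (-m)) ^ p + f x) := by
  have hN5 : (5:ℝ) ≤ (N:ℝ) := by exact_mod_cast hN
  have hN4 : (0:ℝ) < (N:ℝ) - 4 := by linarith
  have hp1 : 1 < p := lt_trans ((one_lt_div hN4).mpr (by linarith)) hp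
  have hp1' : 0 < p - 1 := by linarith
  have hω4 : 4 / (p - 1) ≤ ω - 4 := by
    rw [div_le_iff₀ hp1']
    rw [div_le_iff₀ hp1'] at hω₁
    nlinarith
  refine ⟨by linarith, fun m hm1 _ => by linarith, fun m hm1 hm2 => ?_⟩
  have hmp : 4 / (p - 1) < m := by linarith
  have hm0 : 0 < m := lt_trans (by positivity) hmp
  set K : ℝ := (-m * (-m + (N:ℝ) - 2)) * ((-m - 2) * ((-m - 2) + (N:ℝ) - 2)) with hKdef
  have hK : 0 < K := by
    have h1 : K = (m * ((N:ℝ) - 2 - m)) * ((m + 2) * ((N:ℝ) - 4 - m)) := by rw [hKdef]; ring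
    rw [h1]
    have : 0 < (N:ℝ) - 2 - m := by linarith
    have : 0 < (N:ℝ) - 4 - m := by linarith
    positivity
  refine ⟨(K / 2) ^ (1 / (p - 1)), Real.rpow_pos_of_pos (by linarith) _, fun ξ hξ0 hξ => ?_⟩
  have hξK : ξ ^ (p - 1) < K := by
    have h1 : ξ ^ (p - 1) ≤ ((K / 2) ^ (1 / (p - 1))) ^ (p - 1) :=
      Real.rpow_le_rpow hξ0.le hξ hp1'.le
    have h2 : ((K / 2) ^ (1 / (p - 1))) ^ (p - 1) = K / 2 := by
      rw [← Real.rpow_mul (by linarith : (0:ℝ) ≤ K / 2),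
        one_div_mul_cancel (ne_of_gt hp1'), Real.rpow_one]
    rw [h2] at h1
    linarith
  have hξp : ξ ^ p < ξ * K := by
    have h1 : ξ ^ p = ξ * ξ ^ (p - 1) := by
      rw [show p = 1 + (p - 1) by ring, Real.rpow_add hξ0, Real.rpow_one]
      ring_nf
    rw [h1]
    exact mul_lt_mul_of_pos_left hξK hξ0
  refine ⟨ξ * K, by positivity,
    fun x => ξ * K * ‖x‖ ^ (-m - 4) - (ξ * ‖x‖ ^ (-m)) ^ p, ?_, ?_, ?_, ?_, ?_⟩
  · -- continuity
    intro x hx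
    have hx1 : (1:ℝ) ≤ ‖x‖ := hx
    have hxn : ‖x‖ ≠ 0 := by positivity
    apply ContinuousAt.continuousWithinAt
    have h1 : ContinuousAt (fun x : E N => ‖x‖ ^ (-m - 4)) x :=
      continuous_norm.continuousAt.rpow_const (Or.inl hxn)
    have h2 : ContinuousAt (fun x : E N => ‖x‖ ^ (-m)) x :=
      continuous_norm.continuousAt.rpow_const (Or.inl hxn)
    have h3 : ContinuousAt (fun x : E N => (ξ * ‖x‖ ^ (-m)) ^ p) x := by
      apply ContinuousAt.rpow_const (continuousAt_const.mul h2)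
      left
      have : 0 < ξ * ‖x‖ ^ (-m) := by positivity
      positivity
    exact ((continuousAt_const.mul h1)).sub h3
  · -- bounds
    intro x hx
    set r : ℝ := ‖x‖ with hr
    have hr0 : 0 < r := by linarith
    have hvp : (ξ * r ^ (-m)) ^ p = ξ ^ p * r ^ (-(m * p)) := by
      rw [Real.mul_rpow hξ0.le (Real.rpow_nonneg hr0.le _),
        ← Real.rpow_mul hr0.le, show -m * p = -(m * p) by ring]
    have hmono : r ^ (-(m * p)) ≤ r ^ (-m - 4) := by
      apply Real.rpow_le_rpow_of_exponent_le hx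
      have : 4 < m * (p - 1) := (div_lt_iff₀ hp1').mp hmp
      nlinarith
    have hsub : ξ ^ p * r ^ (-(m * p)) ≤ ξ ^ p * r ^ (-m - 4) :=
      mul_le_mul_of_nonneg_left hmono (Real.rpow_nonneg hξ0.le _)
    have hpos4 : 0 < r ^ (-m - 4) := Real.rpow_pos_of_pos hr0 _
    constructor
    · show 0 < ξ * K * r ^ (-m - 4) - (ξ * r ^ (-m)) ^ p
      rw [hvp]
      have : (ξ * K - ξ ^ p) * r ^ (-m - 4) ≤ ξ * K * r ^ (-m - 4) - ξ ^ p * r ^ (-(m * p)) := by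
        nlinarith
      have h4 : 0 < (ξ * K - ξ ^ p) * r ^ (-m - 4) :=
        mul_pos (by linarith) hpos4
      linarith
    · show ξ * K * r ^ (-m - 4) - (ξ * r ^ (-m)) ^ p ≤ ξ * K * r ^ (-ω)
      have h5 : ξ * K * r ^ (-m - 4) ≤ ξ * K * r ^ (-ω) := by
        apply mul_le_mul_of_nonneg_left _ (by positivity)
        exact Real.rpow_le_rpow_of_exponent_le hx (by linarith)
      have h6 : 0 < (ξ * r ^ (-m)) ^ p := by
        have : 0 < ξ * r ^ (-m) := by positivity
        positivity
      linarith
  · exact contDiffOn_cnormpow ξ (-m)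
  · intro x hx
    have : 0 < ‖x‖ := by linarith
    positivity
  · -- the PDE
    intro x hx
    have hx0 : x ≠ 0 := by
      intro h; rw [h, norm_zero] at hx; linarith
    rw [bilapl_cnormpow ξ (-m) hx0, show -m - 4 = -m - 4 by ring]
    have : ξ * (-m * (-m + (N:ℝ) - 2)) * ((-m - 2) * (-m - 2 + (N:ℝ) - 2)) = ξ * K := by
      rw [hKdef]; ring
    rw [this]
    ring
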